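/- arXiv:1006.2106 — 3 statements merged into one kernel-verified Lean document; each statement's English description precedes it below -/
import Mathlib

section
/- Let p be an odd prime and let 0 ≤ a_1 ≤ a_2 ≤ a_3 be integers with a_1 + a_2 + a_3 odd. Then the density α_p(1_3, diag(p^{a_1}, p^{a_2}, p^{a_3})) exists and equals 0. -/
open scoped BigOperators

noncomputable section

/-- `Z_{p²}`: the Witt vectors of the field with `p²` elements. -/
abbrev Zp2 (p : ℕ) [Fact p.Prime] : Type _ := WittVector p (GaloisField p 2)

/-- The quotient `Z_{p²}/p^k Z_{p²}`. -/
abbrev Qmod (p : ℕ) [Fact p.Prime] (k : ℕ) : Type _ :=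
  Zp2 p ⧸ Ideal.span {(p : Zp2 p) ^ k}

/-- The Frobenius `σ` of `Z_{p²}` (the unique lift of `x ↦ x^p`), induced on the
quotient `Z_{p²}/p^k Z_{p²}`. -/
def sigmaQ (p : ℕ) [Fact p.Prime] (k : ℕ) : Qmod p k →+* Qmod p k :=
  Ideal.quotientMap (Ideal.span {(p : Zp2 p) ^ k}) WittVector.frobenius
    (by
      rw [Ideal.span_le, Set.singleton_subset_iff]
      rw [SetLike.mem_coe, Ideal.mem_comap, map_pow, map_natCast]
      exact Ideal.subset_span (Set.mem_singleton _))

/-- The number of `x ∈ M_{m,l}(Z_{p²}/p^k)` with `ᵗx ⬝ S ⬝ σ(x) ≡ T mod p^k`. -/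
def hermCount (p : ℕ) [Fact p.Prime] (m l k : ℕ)
    (S : Matrix (Fin m) (Fin m) (Zp2 p)) (T : Matrix (Fin l) (Fin l) (Zp2 p)) : ℕ :=
  Nat.card {x : Matrix (Fin m) (Fin l) (Qmod p k) //
    x.transpose * S.map (Ideal.Quotient.mk (Ideal.span {(p : Zp2 p) ^ k})) * x.map (sigmaQ p k) =
      T.map (Ideal.Quotient.mk (Ideal.span {(p : Zp2 p) ^ k}))}

/-- "The hermitian representation density `α_p(S,T)` exists and equals `c`." -/
def alphaEq (p : ℕ) [Fact p.Prime] {m l : ℕ}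
    (S : Matrix (Fin m) (Fin m) (Zp2 p)) (T : Matrix (Fin l) (Fin l) (Zp2 p)) (c : ℝ) : Prop :=
  Filter.Tendsto
    (fun k : ℕ => (hermCount p m l k S T : ℝ) / (p : ℝ) ^ (k * (l * (2 * m - l))))
    Filter.atTop (nhds c)

/-- The norm `y · σ(y)` of a Witt vector cannot be `p^A (1 + p·z)` for odd `A`. -/
lemma norm_ne_odd_pow (p : ℕ) [Fact p.Prime] (A k : ℕ) (hA : Odd A) (hk : A < k)
    (y : Zp2 p)
    (h : (p : Zp2 p) ^ k ∣ y * WittVector.frobenius y - (p : Zp2 p) ^ A) : False := by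
  haveI : IsDiscreteValuationRing (Zp2 p) := WittVector.isDiscreteValuationRing
  have hirr : Irreducible (p : Zp2 p) := WittVector.irreducible p
  obtain ⟨z, hz⟩ := h
  set w : Zp2 p := 1 + (p : Zp2 p) ^ (k - A) * z with hw_def
  have hw : IsUnit w := by
    have he : (1 : Zp2 p) - (-((p : Zp2 p) ^ (k - A) * z)) = w := by rw [hw_def]; ring
    rw [← he]
    apply IsLocalRing.isUnit_one_sub_self_of_mem_nonunits
    intro hu
    exact hirr.not_isUnit (isUnit_of_dvd_unit
      (Dvd.dvd.neg_right (dvd_mul_of_dvd_left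
        (dvd_pow_self (p : Zp2 p) (by omega : k - A ≠ 0)) z)) hu)
  have heq : y * WittVector.frobenius y = (p : Zp2 p) ^ A * w := by
    have hk' : (p : Zp2 p) ^ k = (p : Zp2 p) ^ A * (p : Zp2 p) ^ (k - A) := by
      rw [← pow_add]; congr 1; omega
    rw [hw_def, mul_add, mul_one, ← mul_assoc, ← hk']
    linear_combination hz
  rcases eq_or_ne y 0 with rfl | hy
  · rw [zero_mul] at heq
    rcases mul_eq_zero.mp heq.symm with h0 | h0
    · have hAne : A ≠ 0 := by rintro rfl; simpa using hA
      exact hirr.ne_zero ((pow_eq_zero_iff hAne).mp h0)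
    · exact hw.ne_zero h0
  · obtain ⟨n, u, hyu⟩ := WittVector.exists_eq_pow_p_mul' y hy
    have hfu : IsUnit (WittVector.frobenius (u : Zp2 p)) :=
      u.isUnit.map (WittVector.frobenius : Zp2 p →+* Zp2 p)
    have hf : WittVector.frobenius y = (p : Zp2 p) ^ n * WittVector.frobenius (u : Zp2 p) := by
      rw [hyu, map_mul, map_pow, map_natCast]
    have hm : (↑(u * hfu.unit) : Zp2 p) * (p : Zp2 p) ^ (n + n) =
        (↑hw.unit : Zp2 p) * (p : Zp2 p) ^ A := by
      rw [Units.val_mul, IsUnit.unit_spec, IsUnit.unit_spec]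
      calc (u : Zp2 p) * WittVector.frobenius (u : Zp2 p) * (p : Zp2 p) ^ (n + n)
          = ((p : Zp2 p) ^ n * u) * ((p : Zp2 p) ^ n * WittVector.frobenius (u : Zp2 p)) := by
            rw [pow_add]; ring
        _ = y * WittVector.frobenius y := by rw [← hyu, ← hf]
        _ = w * (p : Zp2 p) ^ A := by rw [heq]; ring
    have h2n := IsDiscreteValuationRing.unit_mul_pow_congr_pow hirr hirr _ _ _ _ hm
    obtain ⟨c, hc⟩ := hA
    omega

/-- for an odd prime `p` and `0 ≤ a₁ ≤ a₂ ≤ a₃` with `a₁ + a₂ + a₃` odd,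
the density `α_p(1_3, diag(p^{a₁}, p^{a₂}, p^{a₃}))` exists and equals `0`. -/
theorem alpha_three_vanishes (p : ℕ) [Fact p.Prime] (hodd : Odd p)
    (a₁ a₂ a₃ : ℕ) (h12 : a₁ ≤ a₂) (h23 : a₂ ≤ a₃) (hsum : Odd (a₁ + a₂ + a₃)) :
    alphaEq p (1 : Matrix (Fin 3) (Fin 3) (Zp2 p))
      (Matrix.diagonal ![(p : Zp2 p) ^ a₁, (p : Zp2 p) ^ a₂, (p : Zp2 p) ^ a₃])
      (0 : ℝ) := by
  set A := a₁ + a₂ + a₃ with hA_def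
  set T : Matrix (Fin 3) (Fin 3) (Zp2 p) :=
    Matrix.diagonal ![(p : Zp2 p) ^ a₁, (p : Zp2 p) ^ a₂, (p : Zp2 p) ^ a₃] with hT_def
  have hdetT : T.det = (p : Zp2 p) ^ A := by
    rw [hT_def, Matrix.det_diagonal, Fin.prod_univ_three]
    simp only [Matrix.cons_val_zero, Matrix.cons_val_one, Matrix.head_cons,
      Matrix.cons_val_two, Matrix.tail_cons]
    rw [← pow_add, ← pow_add]
  have hzero : ∀ k, A < k → hermCount p 3 3 k 1 T = 0 := by
    intro k hk
    rw [hermCount, Nat.card_eq_zero]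
    left
    constructor
    rintro ⟨x, hx⟩
    have hone : (1 : Matrix (Fin 3) (Fin 3) (Zp2 p)).map
        (Ideal.Quotient.mk (Ideal.span {(p : Zp2 p) ^ k})) = 1 :=
      Matrix.map_one _ (map_zero _) (map_one _)
    rw [hone, mul_one] at hx
    have hd := congrArg Matrix.det hx
    rw [Matrix.det_mul, Matrix.det_transpose] at hd
    rw [show x.map (sigmaQ p k) = (sigmaQ p k).mapMatrix x from rfl,
      show T.map (Ideal.Quotient.mk (Ideal.span {(p : Zp2 p) ^ k}))
        = (Ideal.Quotient.mk (Ideal.span {(p : Zp2 p) ^ k})).mapMatrix T from rfl,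
      ← RingHom.map_det, ← RingHom.map_det] at hd
    obtain ⟨y, hy⟩ := Ideal.Quotient.mk_surjective x.det
    rw [← hy, hdetT] at hd
    rw [show sigmaQ p k (Ideal.Quotient.mk _ y)
        = Ideal.Quotient.mk _ (WittVector.frobenius y) from Ideal.quotientMap_mk,
      ← map_mul] at hd
    rw [Ideal.Quotient.eq, Ideal.mem_span_singleton] at hd
    exact norm_ne_odd_pow p A k hsum hk y hd
  have hev : (fun _ : ℕ => (0 : ℝ)) =ᶠ[Filter.atTop]
      (fun k : ℕ => (hermCount p 3 3 k 1 T : ℝ) / (p : ℝ) ^ (k * (3 * (2 * 3 - 3)))) := by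
    filter_upwards [Filter.eventually_gt_atTop A] with k hk
    rw [hzero k hk]
    simp
  exact Filter.Tendsto.congr' hev tendsto_const_nhds
end
end

section
/- Let p be an odd prime (regarded as a real number) and let 0 ≤ a_1 ≤ a_2 ≤ a_3 be integers. Define Σ: ℝ → ℝ by Σ(X) = ∑_{k=0}^{a_1} ∑_{l=0}^{a_1+a_2−2k} (−1)^k · X^{k+l} · ( p^{2k+l} − p^{a_1+a_2−l}·X^{a_3+1} ), and define G(X) = ((1 + X/p³)(1 − X/p²)(1 + X/p)/(1 + X)) · Σ(X) for X ≠ −1. Then Σ(1) = 0, G is differentiable at X = 1, and −G′(1) = (1 + p^{−1})(1 − p^{−2})(1 + p^{−3}) · ( −(1/2) · ∑_{k=0}^{a_1} ∑_{l=0}^{a_1+a_2−2k} (−1)^k · ( (k+l)·p^{2k+l} − (k+l+a_3+1)·p^{a_1+a_2−l} ) ). -/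
open scoped BigOperators

noncomputable section

/-- The double sum `Σ(X)` of the paper's density polynomial for
`T = diag(p^{a₁}, p^{a₂}, p^{a₃})`. -/
def SigFun (P : ℝ) (a₁ a₂ a₃ : ℕ) (X : ℝ) : ℝ :=
  ∑ k ∈ Finset.range (a₁ + 1), ∑ l ∈ Finset.range (a₁ + a₂ - 2 * k + 1),
    (-1 : ℝ) ^ k * X ^ (k + l) * (P ^ (2 * k + l) - P ^ (a₁ + a₂ - l) * X ^ (a₃ + 1))

/-- The rational function `G(X) = ((1 + X/p³)(1 − X/p²)(1 + X/p)/(1 + X))·Σ(X)`. -/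
def GFun (P : ℝ) (a₁ a₂ a₃ : ℕ) (X : ℝ) : ℝ :=
  ((1 + X / P ^ 3) * (1 - X / P ^ 2) * (1 + X / P) / (1 + X)) * SigFun P a₁ a₂ a₃ X

/-- `Σ(1) = 0`, `G` is differentiable at `X = 1`, and `−G′(1)` equals
`(1+p^{−1})(1−p^{−2})(1+p^{−3})·(−(1/2)·∑∑ …)`. -/
theorem deriv_of_density_rational_function (p : ℕ) (hp : p.Prime) (hodd : Odd p)
    (a₁ a₂ a₃ : ℕ) (h12 : a₁ ≤ a₂) (h23 : a₂ ≤ a₃) :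
    SigFun (p : ℝ) a₁ a₂ a₃ 1 = 0 ∧
    DifferentiableAt ℝ (GFun (p : ℝ) a₁ a₂ a₃) 1 ∧
    -(deriv (GFun (p : ℝ) a₁ a₂ a₃) 1) =
      (1 + (p : ℝ) ^ (-1 : ℤ)) * (1 - (p : ℝ) ^ (-2 : ℤ)) * (1 + (p : ℝ) ^ (-3 : ℤ)) *
        (-(1 / 2) * ∑ k ∈ Finset.range (a₁ + 1), ∑ l ∈ Finset.range (a₁ + a₂ - 2 * k + 1),
          (-1 : ℝ) ^ k *
            (((k : ℝ) + l) * (p : ℝ) ^ (2 * k + l) -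
              ((k : ℝ) + l + a₃ + 1) * (p : ℝ) ^ (a₁ + a₂ - l))) := by
  set P : ℝ := (p : ℝ) with hPdef
  have hP0 : P ≠ 0 := by
    simp [hPdef, hp.ne_zero]
  -- Σ(1) = 0
  have hS1 : SigFun P a₁ a₂ a₃ 1 = 0 := by
    unfold SigFun
    refine Finset.sum_eq_zero fun k hk => ?_
    have hk' : k ≤ a₁ := by simpa using Nat.lt_succ_iff.mp (Finset.mem_range.mp hk)
    simp only [one_pow, mul_one]
    rw [← Finset.mul_sum]
    have hrev : ∑ l ∈ Finset.range (a₁ + a₂ - 2 * k + 1), P ^ (a₁ + a₂ - l)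
        = ∑ l ∈ Finset.range (a₁ + a₂ - 2 * k + 1), P ^ (2 * k + l) := by
      rw [← Finset.sum_range_reflect (fun l => P ^ (2 * k + l))]
      refine Finset.sum_congr rfl fun l hl => ?_
      have hl' := Finset.mem_range.mp hl
      congr 1
      omega
    rw [Finset.sum_sub_distrib, hrev, sub_self, mul_zero]
  -- derivative of Σ at 1
  set S' : ℝ := ∑ k ∈ Finset.range (a₁ + 1), ∑ l ∈ Finset.range (a₁ + a₂ - 2 * k + 1),
      (-1 : ℝ) ^ k *
        (((k : ℝ) + l) * P ^ (2 * k + l) -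
          ((k : ℝ) + l + a₃ + 1) * P ^ (a₁ + a₂ - l)) with hS'def
  have hSig : HasDerivAt (SigFun P a₁ a₂ a₃) S' 1 := by
    unfold SigFun
    rw [hS'def]
    refine HasDerivAt.fun_sum fun k _ => ?_
    refine HasDerivAt.fun_sum fun l _ => ?_
    have h1 := (hasDerivAt_pow (k + l) (1 : ℝ)).const_mul ((-1 : ℝ) ^ k)
    have h2 := ((hasDerivAt_pow (a₃ + 1) (1 : ℝ)).const_mul (P ^ (a₁ + a₂ - l))).const_sub
      (P ^ (2 * k + l))
    convert h1.mul h2 using 1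
    · rfl
    · rfl
    simp only [one_pow, mul_one]
    push_cast
    ring
  -- G = F * Σ
  set F : ℝ → ℝ := fun X => (1 + X / P ^ 3) * (1 - X / P ^ 2) * (1 + X / P) / (1 + X)
    with hFdef
  have hFd : DifferentiableAt ℝ F 1 := by
    apply DifferentiableAt.div
    · fun_prop
    · fun_prop
    · norm_num
  have hG : HasDerivAt (GFun P a₁ a₂ a₃) (deriv F 1 * SigFun P a₁ a₂ a₃ 1 + F 1 * S') 1 :=
    hFd.hasDerivAt.mul hSig
  refine ⟨hS1, hG.differentiableAt, ?_⟩
  rw [hG.deriv, hS1, mul_zero, zero_add]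
  have hF1 : F 1 = (1 + P⁻¹) * (1 - (P ^ 2)⁻¹) * (1 + (P ^ 3)⁻¹) / 2 := by
    rw [hFdef]
    field_simp
    ring
  have e1 : P ^ (-1 : ℤ) = P⁻¹ := by rw [zpow_neg, zpow_one]
  have e2 : P ^ (-2 : ℤ) = (P ^ 2)⁻¹ := by
    rw [zpow_neg]; norm_cast
  have e3 : P ^ (-3 : ℤ) = (P ^ 3)⁻¹ := by
    rw [zpow_neg]; norm_cast
  rw [hF1, e1, e2, e3]
  ring
end
end

section
/- Let p be an odd prime, n ≥ 2 an integer, and 0 ≤ a_1 ≤ … ≤ a_n integers; put Σ = a_1+…+a_n and Σ⁻ = a_1+…+a_{n−1}. Work in the field ℚ(X) of rational functions over ℚ. For a nonzero c ∈ ℚ, let τ_c denote the ℚ-algebra endomorphism of ℚ(X) with τ_c(X) = cX, and ι_c the ℚ-algebra endomorphism with ι_c(X) = cX^{−1}. Set t_m(X) = ∏_{i=0}^{m−1} (1 − (−p)^i X)^{−1}, H(X) = (1−X)(1+pX), and A(X) = (1−(−p)^{n−1}X)·(1−(−p)^{−n}X^{−1})·(−p)^{Σ⁻}·(−1)^{(n+1)a_n}·(p^n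 X)^{a_n+2}. Suppose F, F⁻, F⁺ ∈ ℚ(X) satisfy: (i) F⁺ = p^{2n}X²·F + H(X)·τ_{p²}(F⁻); (ii) F·t_n(X) = ((−1)^{n+1}p^n X)^{Σ}·ι_{p^{−2n}}(F)·ι_{p^{−2n}}(t_n(X)); (iii) F⁻·t_{n−1}(X) = ((−1)^{n}p^{n−1}X)^{Σ⁻}·ι_{p^{−2(n−1)}}(F⁻)·ι_{p^{−2(n−1)}}(t_{n−1}(X)); (iv) F⁺·t_n(X) = ((−1)^{n+1}p^n X)^{Σ⁻+a_n+2}·ι_{p^{−2n}}(F⁺)·ι_{p^{−2n}}(t_n(X)). Then (1 − p^{2n}X²)·F = H(X)·τ_{p²}(F⁻) − A(X)·F⁻ in ℚ(X). -/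
open scoped BigOperators

noncomputable section

open RatFunc

lemma my_algHom_ext {f g : RatFunc ℚ →ₐ[ℚ] RatFunc ℚ}
    (h : f RatFunc.X = g RatFunc.X) : f = g := by
  have hpoly : ∀ q : Polynomial ℚ, f (algebraMap _ _ q) = g (algebraMap _ _ q) := by
    intro q
    induction q using Polynomial.induction_on with
    | C c =>
        rw [RatFunc.algebraMap_C, ← RatFunc.algebraMap_eq_C,
          eq_ratCast (@algebraMap ℚ (RatFunc ℚ) _ _ (RatFunc.instAlgebraOfPolynomial ℚ ℚ)),
          map_ratCast, map_ratCast]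
    | add p q hp hq => rw [map_add, map_add, map_add, hp, hq]
    | monomial n c ih =>
        simp only [map_mul, map_pow, RatFunc.algebraMap_C, RatFunc.algebraMap_X,
          ← RatFunc.algebraMap_eq_C, AlgHom.commutes, h, eq_ratCast, map_ratCast]
  apply AlgHom.ext
  intro x
  rw [← RatFunc.num_div_denom x, map_div₀, map_div₀, hpoly, hpoly]

lemma my_linX_ne_zero (c : ℚ) : 1 - RatFunc.C c * RatFunc.X ≠ 0 := by
  have h1 : (1 - Polynomial.C c * Polynomial.X : Polynomial ℚ) ≠ 0 := by
    intro h
    have := congrArg (fun q => Polynomial.coeff q 0) h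
    simp at this
  have h2 : (1 : RatFunc ℚ) - RatFunc.C c * RatFunc.X
      = algebraMap (Polynomial ℚ) _ (1 - Polynomial.C c * Polynomial.X) := by
    simp [map_sub, RatFunc.algebraMap_C, RatFunc.algebraMap_X]
  rw [h2]
  exact RatFunc.algebraMap_ne_zero h1

lemma my_linXinv_ne_zero (c : ℚ) : 1 - RatFunc.C c * RatFunc.X⁻¹ ≠ 0 := by
  intro h
  have hX : (RatFunc.X : RatFunc ℚ) ≠ 0 := RatFunc.X_ne_zero
  have h2 : (RatFunc.X : RatFunc ℚ) - RatFunc.C c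
      = RatFunc.X * (1 - RatFunc.C c * RatFunc.X⁻¹) := by
    field_simp
  rw [h, mul_zero, sub_eq_zero] at h2
  have h3 : (Polynomial.X - Polynomial.C c : Polynomial ℚ) ≠ 0 :=
    Polynomial.X_sub_C_ne_zero c
  apply RatFunc.algebraMap_ne_zero h3
  rw [map_sub, RatFunc.algebraMap_X, RatFunc.algebraMap_C, sub_eq_zero, h2]

lemma myC_ne_zero {c : ℚ} (h : c ≠ 0) : RatFunc.C c ≠ 0 := by
  rw [← RatFunc.algebraMap_C]
  exact RatFunc.algebraMap_ne_zero (by simpa using h)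

/-- in `ℚ(X)`, given the density recursion (i) and Ikeda's functional
equations (ii)–(iv) for `F`, `F⁻`, `F⁺`, one has
`(1 − p^{2n}X²)·F = H(X)·τ_{p²}(F⁻) − A(X)·F⁻`. -/
theorem functional_equation_recursion (p : ℕ) (hp : p.Prime) (hodd : Odd p)
    (n : ℕ) (hn : 2 ≤ n) (a : Fin n → ℕ) (ha : Monotone a)
    (an Sm S : ℕ) (han : an = a ⟨n - 1, by omega⟩)
    (hSm : Sm = ∑ i : Fin (n - 1), a (Fin.castLE (Nat.sub_le n 1) i))
    (hS : S = ∑ i, a i)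
    -- the substitution endomorphisms τ_{p²}, ι_{p^{-2n}}, ι_{p^{-2(n-1)}} of ℚ(X)
    (τ ι ι' : RatFunc ℚ →ₐ[ℚ] RatFunc ℚ)
    (hτ : τ RatFunc.X = RatFunc.C ((p : ℚ) ^ 2) * RatFunc.X)
    (hι : ι RatFunc.X = RatFunc.C ((p : ℚ) ^ (-(2 * n : ℤ))) * RatFunc.X⁻¹)
    (hι' : ι' RatFunc.X = RatFunc.C ((p : ℚ) ^ (-(2 * (n - 1 : ℕ) : ℤ))) * RatFunc.X⁻¹)
    -- the auxiliary rational functions t_m, H, A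
    (t : ℕ → RatFunc ℚ)
    (ht : ∀ m : ℕ, t m = ∏ i ∈ Finset.range m,
      (1 - RatFunc.C ((-(p : ℚ)) ^ i) * RatFunc.X)⁻¹)
    (H A : RatFunc ℚ)
    (hH : H = (1 - RatFunc.X) * (1 + RatFunc.C (p : ℚ) * RatFunc.X))
    (hA : A = (1 - RatFunc.C ((-(p : ℚ)) ^ (n - 1)) * RatFunc.X) *
        (1 - RatFunc.C ((-(p : ℚ)) ^ (-(n : ℤ))) * RatFunc.X⁻¹) *
        RatFunc.C ((-(p : ℚ)) ^ Sm) * RatFunc.C ((-1 : ℚ) ^ ((n + 1) * an)) *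
        (RatFunc.C ((p : ℚ) ^ n) * RatFunc.X) ^ (an + 2))
    (F Fm Fp : RatFunc ℚ)
    -- (i) the recursion relating F⁺, F and F⁻
    (hrec : Fp = RatFunc.C ((p : ℚ) ^ (2 * n)) * RatFunc.X ^ 2 * F + H * τ Fm)
    -- (ii)–(iv) Ikeda's functional equations
    (hfeF : F * t n =
      (RatFunc.C ((-1 : ℚ) ^ (n + 1) * (p : ℚ) ^ n) * RatFunc.X) ^ S * ι F * ι (t n))
    (hfeFm : Fm * t (n - 1) =
      (RatFunc.C ((-1 : ℚ) ^ n * (p : ℚ) ^ (n - 1)) * RatFunc.X) ^ Sm * ι' Fm * ι' (t (n - 1)))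
    (hfeFp : Fp * t n =
      (RatFunc.C ((-1 : ℚ) ^ (n + 1) * (p : ℚ) ^ n) * RatFunc.X) ^ (Sm + an + 2) *
        ι Fp * ι (t n)) :
    (1 - RatFunc.C ((p : ℚ) ^ (2 * n)) * RatFunc.X ^ 2) * F = H * τ Fm - A * Fm := by
  have hp0 : (p : ℚ) ≠ 0 := Nat.cast_ne_zero.mpr hp.ne_zero
  have hnp0 : (-(p : ℚ)) ≠ 0 := neg_ne_zero.mpr hp0
  obtain ⟨m, rfl⟩ : ∃ m, n = m + 1 := ⟨n - 1, by omega⟩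
  have hX0 : (RatFunc.X : RatFunc ℚ) ≠ 0 := RatFunc.X_ne_zero
  have hSsum : S = Sm + an := by
    rw [hS, hSm, han, Fin.sum_univ_castSucc (n := m)]
    rfl
  clear hS hSm han hn ha hodd
  simp only [Nat.add_sub_cancel] at hι' hfeFm hA
  push_cast at hι hι' hA
  rw [hSsum] at hfeF
  -- zpow facts
  have hz1 : (p : ℚ) ^ (-(2 * ((m : ℤ) + 1))) = ((p : ℚ) ^ (2 * (m + 1)))⁻¹ := by
    rw [zpow_neg]
    congr 1
  have hz0 : (p : ℚ) ^ (-(2 * (m : ℤ))) = ((p : ℚ) ^ (2 * m))⁻¹ := by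
    rw [zpow_neg]
    congr 1
  have hpp : (-(p : ℚ)) ^ (m + 1) * (-(p : ℚ)) ^ (m + 1) = (p : ℚ) ^ (2 * (m + 1)) := by
    rw [← mul_pow, neg_mul_neg, ← sq, ← pow_mul]
  have hsc : (-(p : ℚ)) ^ (-((m : ℤ) + 1))
      = (-(p : ℚ)) ^ (m + 1) * (p : ℚ) ^ (-(2 * ((m : ℤ) + 1))) := by
    rw [hz1, show (-((m : ℤ) + 1)) = -((m + 1 : ℕ) : ℤ) by push_cast; ring, zpow_neg,
      zpow_natCast]
    rw [← hpp, mul_inv, ← mul_assoc, mul_inv_cancel₀ (pow_ne_zero _ hnp0), one_mul]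
  -- P family
  set q : ℕ → ℚ := fun i => (-(p : ℚ)) ^ i * (p : ℚ) ^ (-(2 * ((m : ℤ) + 1))) with hq
  set P : ℕ → RatFunc ℚ := fun i => 1 - RatFunc.C (q i) * RatFunc.X⁻¹ with hPdef
  have hP0 : ∀ i, P i ≠ 0 := fun i => my_linXinv_ne_zero _
  set W : RatFunc ℚ := ∏ i ∈ Finset.range (m + 1), P i with hWdef
  set W' : RatFunc ℚ := ∏ i ∈ Finset.range m, P (i + 2) with hW'def
  have hW0 : W ≠ 0 := Finset.prod_ne_zero_iff.mpr fun i _ => hP0 i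
  have hW'0 : W' ≠ 0 := Finset.prod_ne_zero_iff.mpr fun i _ => hP0 _
  have ht0 : ∀ k, t k ≠ 0 := by
    intro k
    rw [ht k]
    exact Finset.prod_ne_zero_iff.mpr fun i _ => inv_ne_zero (my_linX_ne_zero _)
  have hC : ∀ (f : RatFunc ℚ →ₐ[ℚ] RatFunc ℚ) (c : ℚ), f (RatFunc.C c) = RatFunc.C c := by
    intro f c
    rw [← RatFunc.algebraMap_eq_C]
    rw [eq_ratCast (@algebraMap ℚ (RatFunc ℚ) _ _ (RatFunc.instAlgebraOfPolynomial ℚ ℚ)), map_ratCast]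
  have hv : ι (t (m + 1)) = W⁻¹ := by
    rw [ht, map_prod, hWdef, ← Finset.prod_inv_distrib]
    refine Finset.prod_congr rfl fun i _ => ?_
    rw [map_inv₀, map_sub, map_one, map_mul, hC, hι, hPdef]
    simp only [hq]
    rw [← mul_assoc, ← map_mul]
  have hv' : ι' (t m) = W'⁻¹ := by
    rw [ht, map_prod, hW'def, ← Finset.prod_inv_distrib]
    refine Finset.prod_congr rfl fun i _ => ?_
    rw [map_inv₀, map_sub, map_one, map_mul, hC, hι', hPdef]
    simp only [hq]
    rw [← mul_assoc, ← map_mul]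
    congr 3
    rw [hz0, hz1, ← div_eq_mul_inv, ← div_eq_mul_inv]
    congr 1
    rw [div_eq_div_iff (pow_ne_zero _ hp0) (pow_ne_zero _ hp0)]
    ring
  have hιH : ι H = P 0 * P 1 := by
    rw [hH, map_mul, map_sub, map_one, map_add, map_one, map_mul, hC, hι, hPdef]
    simp only [hq]
    congr 1
    · congr 2
      rw [pow_zero, one_mul]
    · rw [← mul_assoc, ← map_mul]
      have hcc2 : (p : ℚ) * (p : ℚ) ^ (-(2 * ((m : ℤ) + 1)))
          = -((-(p : ℚ)) ^ 1 * (p : ℚ) ^ (-(2 * ((m : ℤ) + 1)))) := by ring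
      rw [hcc2, map_neg]
      ring
  have hτι : ι (τ Fm) = ι' Fm := by
    have hcomp : ι.comp τ = ι' := by
      apply my_algHom_ext
      rw [AlgHom.comp_apply, hτ, map_mul, hC, hι, hι', ← mul_assoc, ← map_mul]
      congr 2
      rw [hz0, hz1]
      field_simp
      ring
    calc ι (τ Fm) = (ι.comp τ) Fm := rfl
    _ = ι' Fm := by rw [hcomp]
  have hg : P 0 * P 1 * W' = P (m + 1) * W := by
    have h1 : ∏ i ∈ Finset.range (m + 2), P i = P (m + 1) * W := by
      rw [Finset.prod_range_succ, hWdef]; ring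
    have h2 : ∏ i ∈ Finset.range (m + 2), P i = P 0 * P 1 * W' := by
      rw [Finset.prod_range_succ', Finset.prod_range_succ', hW'def]
      ring
    rw [← h2, h1]
  have hQt : (1 - RatFunc.C ((-(p : ℚ)) ^ m) * RatFunc.X) * t (m + 1) = t m := by
    rw [ht (m + 1), ht m, Finset.prod_range_succ, ← mul_assoc,
      mul_comm (1 - RatFunc.C ((-(p : ℚ)) ^ m) * RatFunc.X), mul_assoc,
      mul_inv_cancel₀ (my_linX_ne_zero _), mul_one]
  -- constant fact c1
  have hCp2 : RatFunc.C ((p : ℚ) ^ (2 * (m + 1))) ≠ 0 := myC_ne_zero (pow_ne_zero _ hp0)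
  have hconst : ((-1 : ℚ) ^ (m + 1 + 1) * (p : ℚ) ^ (m + 1)) ^ 2 = (p : ℚ) ^ (2 * (m + 1)) := by
    rw [mul_pow, ← pow_mul, ← pow_mul,
      show (m + 1 + 1) * 2 = 2 * (m + 1 + 1) by ring, pow_mul]
    norm_num
    ring
  have hc1 : (RatFunc.C ((-1 : ℚ) ^ (m + 1 + 1) * (p : ℚ) ^ (m + 1)) * RatFunc.X) ^ 2 *
      (RatFunc.C ((p : ℚ) ^ (2 * (m + 1))) *
        (RatFunc.C ((p : ℚ) ^ (-(2 * ((m : ℤ) + 1)))) * RatFunc.X⁻¹) ^ 2) = 1 := by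
    set Y : RatFunc ℚ := RatFunc.C ((p : ℚ) ^ (2 * (m + 1))) with hYdef
    have h_a : (RatFunc.C ((-1 : ℚ) ^ (m + 1 + 1) * (p : ℚ) ^ (m + 1)) * RatFunc.X) ^ 2
        = Y * RatFunc.X ^ 2 := by
      rw [mul_pow, ← map_pow, hconst]
    have h_b : (RatFunc.C ((p : ℚ) ^ (-(2 * ((m : ℤ) + 1)))) * RatFunc.X⁻¹) ^ 2
        = (Y * (Y * RatFunc.X ^ 2))⁻¹ := by
      rw [hz1, map_inv₀, ← mul_inv, inv_pow]
      congr 1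
      rw [hYdef]
      ring
    rw [h_a, h_b, mul_inv Y (Y * RatFunc.X ^ 2), ← mul_assoc Y Y⁻¹,
      mul_inv_cancel₀ hCp2, one_mul]
    exact mul_inv_cancel₀ (mul_ne_zero hCp2 (pow_ne_zero 2 hX0))
  have hEE' : RatFunc.C ((-1 : ℚ) ^ (m + 1 + 1) * (p : ℚ) ^ (m + 1))
      = RatFunc.C (-(p : ℚ)) * RatFunc.C ((-1 : ℚ) ^ (m + 1) * (p : ℚ) ^ m) := by
    rw [← map_mul]
    congr 1
    ring
  have hEpow : (RatFunc.C ((-1 : ℚ) ^ (m + 1 + 1) * (p : ℚ) ^ (m + 1)) * RatFunc.X) ^ Sm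
      = RatFunc.C (-(p : ℚ)) ^ Sm *
        (RatFunc.C ((-1 : ℚ) ^ (m + 1) * (p : ℚ) ^ m) * RatFunc.X) ^ Sm := by
    rw [hEE', mul_assoc, mul_pow]
  have hcc : ((-1 : ℚ) ^ (m + 1 + 1)) ^ (an + 2) = (-1 : ℚ) ^ ((m + 1 + 1) * an) := by
    rw [← pow_mul, show (m + 1 + 1) * (an + 2) = (m + 1 + 1) * an + (m + 1 + 1) * 2 by ring,
      pow_add, pow_mul]
    norm_num
  have hE2 : (RatFunc.C ((-1 : ℚ) ^ (m + 1 + 1) * (p : ℚ) ^ (m + 1)) * RatFunc.X) ^ (an + 2)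
      = RatFunc.C ((-1 : ℚ) ^ ((m + 1 + 1) * an)) *
        (RatFunc.C ((p : ℚ) ^ (m + 1)) * RatFunc.X) ^ (an + 2) := by
    rw [show RatFunc.C ((-1 : ℚ) ^ (m + 1 + 1) * (p : ℚ) ^ (m + 1)) * RatFunc.X
        = RatFunc.C ((-1 : ℚ) ^ (m + 1 + 1)) * (RatFunc.C ((p : ℚ) ^ (m + 1)) * RatFunc.X) by
      rw [map_mul, mul_assoc], mul_pow, ← map_pow, hcc]
  have hA' : A = (1 - RatFunc.C ((-(p : ℚ)) ^ m) * RatFunc.X) * P (m + 1) *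
      RatFunc.C (-(p : ℚ)) ^ Sm * RatFunc.C ((-1 : ℚ) ^ ((m + 1 + 1) * an)) *
      (RatFunc.C ((p : ℚ) ^ (m + 1)) * RatFunc.X) ^ (an + 2) := by
    rw [hA, ← map_pow]
    simp only [hPdef, hq]
    rw [hsc]
  -- functional equation for Fm in product form
  have hfeFm' : Fm * t m = (RatFunc.C ((-1 : ℚ) ^ (m + 1) * (p : ℚ) ^ m) * RatFunc.X) ^ Sm *
      ι' Fm * W'⁻¹ := by rw [hfeFm, hv']
  have h2 : (RatFunc.C ((-1 : ℚ) ^ (m + 1) * (p : ℚ) ^ m) * RatFunc.X) ^ Sm * ι' Fm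
      = Fm * t m * W' := by
    rw [hfeFm', mul_assoc, inv_mul_cancel₀ hW'0, mul_one]
  have hWW : W⁻¹ * W = 1 := inv_mul_cancel₀ hW0
  -- lemma A
  have lemA : (RatFunc.C ((-1 : ℚ) ^ (m + 1 + 1) * (p : ℚ) ^ (m + 1)) * RatFunc.X) ^ (Sm + an + 2) *
      (RatFunc.C ((p : ℚ) ^ (2 * (m + 1))) *
        (RatFunc.C ((p : ℚ) ^ (-(2 * ((m : ℤ) + 1)))) * RatFunc.X⁻¹) ^ 2 * ι F) *
      ι (t (m + 1)) = F * t (m + 1) := by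
    linear_combination ((RatFunc.C ((-1 : ℚ) ^ (m + 1 + 1) * (p : ℚ) ^ (m + 1)) * RatFunc.X) ^ (Sm + an) *
      ι F * ι (t (m + 1))) * hc1 - hfeF
  -- lemma B
  have lemB : (RatFunc.C ((-1 : ℚ) ^ (m + 1 + 1) * (p : ℚ) ^ (m + 1)) * RatFunc.X) ^ (Sm + an + 2) *
      (ι H * ι' Fm) * ι (t (m + 1)) = A * Fm * t (m + 1) := by
    rw [hv, hιH, hA']
    linear_combination
      ((RatFunc.C ((-1 : ℚ) ^ (m + 1 + 1) * (p : ℚ) ^ (m + 1)) * RatFunc.X) ^ (an + 2) *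
        P 0 * P 1 * W⁻¹ * ι' Fm) * hEpow
      + (RatFunc.C (-(p : ℚ)) ^ Sm *
        (RatFunc.C ((-1 : ℚ) ^ (m + 1 + 1) * (p : ℚ) ^ (m + 1)) * RatFunc.X) ^ (an + 2) *
        P 0 * P 1 * W⁻¹) * h2
      + (RatFunc.C (-(p : ℚ)) ^ Sm *
        (RatFunc.C ((-1 : ℚ) ^ (m + 1 + 1) * (p : ℚ) ^ (m + 1)) * RatFunc.X) ^ (an + 2) *
        W⁻¹ * Fm * t m) * hg
      + (RatFunc.C (-(p : ℚ)) ^ Sm *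
        (RatFunc.C ((-1 : ℚ) ^ (m + 1 + 1) * (p : ℚ) ^ (m + 1)) * RatFunc.X) ^ (an + 2) *
        Fm * t m * P (m + 1)) * hWW
      - (RatFunc.C (-(p : ℚ)) ^ Sm *
        (RatFunc.C ((-1 : ℚ) ^ (m + 1 + 1) * (p : ℚ) ^ (m + 1)) * RatFunc.X) ^ (an + 2) *
        P (m + 1) * Fm) * hQt
      + (RatFunc.C (-(p : ℚ)) ^ Sm * P (m + 1) *
        (1 - RatFunc.C ((-(p : ℚ)) ^ m) * RatFunc.X) * Fm * t (m + 1)) * hE2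
  -- ι applied to the recursion
  have hιFp : ι Fp = RatFunc.C ((p : ℚ) ^ (2 * (m + 1))) *
      (RatFunc.C ((p : ℚ) ^ (-(2 * ((m : ℤ) + 1)))) * RatFunc.X⁻¹) ^ 2 * ι F +
      ι H * ι' Fm := by
    rw [hrec]
    simp only [map_add, map_mul, map_pow, hτι, hι, hC]
  have key : Fp * t (m + 1) = F * t (m + 1) + A * Fm * t (m + 1) := by
    linear_combination hfeFp +
      ((RatFunc.C ((-1 : ℚ) ^ (m + 1 + 1) * (p : ℚ) ^ (m + 1)) * RatFunc.X) ^ (Sm + an + 2) *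
        ι (t (m + 1))) * hιFp + lemA + lemB
  have hkey2 : Fp = F + A * Fm := mul_right_cancel₀ (ht0 (m + 1)) (key.trans (by ring))
  linear_combination hrec - hkey2
end
end
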